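/- If π, π' ∈ S_n are sorted permutations (i.e., have nonempty stack-sorting preimage) with the same skeleton, then the canonical preimages of π and π' have the same skeleton. -/

import Mathlib

/-- `l` is a permutation of `{1, …, n}`, written as a word. -/
def IsPermList (n : ℕ) (l : List ℕ) : Prop := l.Perm (List.range' 1 n)

/-- The word obtained from `l` by exchanging the positions of the entries `i` and `i+1`. -/
def swapEntries (i : ℕ) (l : List ℕ) : List ℕ :=
  l.map fun x => if x = i then i + 1 else if x = i + 1 then i else x

/-- Some entry larger than `i+1` appears (strictly) between the entries `i` and `i+1`
in the word `l`. -/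
def ToggleApplies (i : ℕ) (l : List ℕ) : Prop :=
  ∃ a ∈ l, i + 1 < a ∧
    min (l.idxOf i) (l.idxOf (i + 1)) < l.idxOf a ∧
    l.idxOf a < max (l.idxOf i) (l.idxOf (i + 1))

open scoped Classical in
/-- The polyurethane toggle `p i`. -/
noncomputable def toggle (i : ℕ) (l : List ℕ) : List ℕ :=
  if ToggleApplies i l then swapEntries i l else l

lemma max_getD_mem (l : List ℕ) (h : l ≠ []) : l.max?.getD 0 ∈ l := by
  rcases hm : l.max? with _ | m'
  · exact absurd (List.max?_eq_none_iff.mp hm) h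
  · simpa using List.max?_mem hm

lemma length_takeWhile_lt (p : ℕ → Bool) (l : List ℕ) (x : ℕ) (hx : x ∈ l) (hpx : p x = false) :
    (l.takeWhile p).length < l.length := by
  rcases Nat.lt_or_ge (l.takeWhile p).length l.length with h | h
  · exact h
  · have := List.takeWhile_eq_self_iff.mp ((List.takeWhile_sublist p).eq_of_length_le h) x hx
    rw [hpx] at this; exact absurd this (by simp)

lemma length_dropWhile_tail_lt (p : ℕ → Bool) (l : List ℕ) (h : l ≠ []) :
    ((l.dropWhile p).tail).length < l.length := by
  have h1 : (l.dropWhile p).length ≤ l.length := (List.dropWhile_sublist _).length_le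
  have h2 : ((l.dropWhile p).tail).length ≤ (l.dropWhile p).length - 1 := by
    simp [List.length_tail]
  have : 0 < l.length := List.length_pos_iff.mpr h
  omega

/-- West's stack-sorting map `s`: `s([]) = []` and `s(LmR) = s(L) s(R) m`,
where `m` is the largest entry. -/
def stackSort : List ℕ → List ℕ
  | [] => []
  | a :: rest =>
    stackSort ((a :: rest).takeWhile (· ≠ (a :: rest).max?.getD 0)) ++
      stackSort (((a :: rest).dropWhile (· ≠ (a :: rest).max?.getD 0)).tail) ++
      [(a :: rest).max?.getD 0]
termination_by l => l.length
decreasing_by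
  · exact length_takeWhile_lt _ _ _ (max_getD_mem (a :: rest) (by simp)) (by simp)
  · exact length_dropWhile_tail_lt _ _ (by simp)

/-- The inverse of the permutation `l` of `{1, …, n}`, as a word: its `k`-th entry is the
position (1-indexed) of the entry `k` in `l`. -/
def invw (l : List ℕ) : List ℕ := (List.range' 1 l.length).map fun k => l.idxOf k + 1

/-- The composition `l · m` of permutations written as words: `(l · m) j = l (m j)`. -/
def compw (l m : List ℕ) : List ℕ := m.map fun k => l.getD (k - 1) 0

/-- The group element `π⁻¹ · s(π)`, which encodes the skeleton of `π`: two permutations of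
`{1, …, n}` have the same skeleton if and only if their `skel`s coincide. -/
def skel (l : List ℕ) : List ℕ := compw (invw l) (stackSort l)

/-- Binary plane trees with vertices labeled by natural numbers. -/
inductive BTree where
  | leaf : BTree
  | node : BTree → ℕ → BTree → BTree

/-- The in-order reading of a labeled binary plane tree. -/
def BTree.inorder : BTree → List ℕ
  | .leaf => []
  | .node L a R => L.inorder ++ a :: R.inorder

/-- A decreasing binary plane tree: every child's label is smaller than its parent's. -/
inductive BTree.Decreasing : BTree → Prop
  | leaf : BTree.Decreasing .leaf
  | node (L : BTree) (a : ℕ) (R : BTree) :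
      L.Decreasing → R.Decreasing →
      (∀ LL b LR, L = .node LL b LR → b < a) →
      (∀ RL b RR, R = .node RL b RR → b < a) →
      BTree.Decreasing (.node L a R)

/-- Bousquet-Mélou's canonical trees: every vertex having a left child has a nonempty
right subtree whose in-order reading begins with an entry smaller than the label of the
left child. -/
inductive BTree.Canonical : BTree → Prop
  | leaf : BTree.Canonical .leaf
  | node (L : BTree) (a : ℕ) (R : BTree) :
      L.Canonical → R.Canonical →
      (∀ LL b LR, L = .node LL b LR → ∃ c, R.inorder.head? = some c ∧ c < b) →
      BTree.Canonical (.node L a R)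

/-- A permutation is canonical if its decreasing binary plane tree (under the in-order
bijection) is canonical. -/
def CanonicalPerm (σ : List ℕ) : Prop :=
  ∃ T : BTree, T.Decreasing ∧ T.inorder = σ ∧ T.Canonical

/-! ### Auxiliary development -/

section Aux

open List

/-- takeWhile over an append when the predicate holds on the first part. -/
lemma aux_takeWhile_append {p : ℕ → Bool} {l1 l2 : List ℕ} (h : ∀ x ∈ l1, p x = true) :
    (l1 ++ l2).takeWhile p = l1 ++ l2.takeWhile p := by
  induction l1 with
  | nil => simp
  | cons a t ih =>
    simp only [List.cons_append, List.takeWhile_cons, h a (by simp)]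
    rw [ih (fun x hx => h x (by simp [hx]))]
    simp

lemma aux_dropWhile_append {p : ℕ → Bool} {l1 l2 : List ℕ} (h : ∀ x ∈ l1, p x = true) :
    (l1 ++ l2).dropWhile p = l2.dropWhile p := by
  induction l1 with
  | nil => simp
  | cons a t ih =>
    simp only [List.cons_append, List.dropWhile_cons, h a (by simp)]
    exact ih (fun x hx => h x (by simp [hx]))

lemma aux_max?_eq (l : List ℕ) (m : ℕ) (hm : m ∈ l) (hub : ∀ x ∈ l, x ≤ m) :
    l.max? = some m := by
  rw [List.max?_eq_some_iff]
  · exact ⟨hm, hub⟩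
  all_goals simp [le_total, max_comm]

/-- Splitting a list at a unique occurrence. -/
lemma aux_split_unique {X1 X2 Y1 Y2 : List ℕ} {a : ℕ}
    (h : X1 ++ a :: Y1 = X2 ++ a :: Y2) (h1 : a ∉ X1) (h2 : a ∉ X2) :
    X1 = X2 ∧ Y1 = Y2 := by
  have key : ∀ (X Y : List ℕ), a ∉ X → (X ++ a :: Y).takeWhile (fun x => decide (x ≠ a)) = X := by
    intro X Y hX
    rw [aux_takeWhile_append (fun x hx => by
      simp only [decide_eq_true_eq]; exact fun he => hX (he ▸ hx))]
    simp
  have e1 := key X1 Y1 h1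
  have e2 := key X2 Y2 h2
  rw [h] at e1
  have hX : X1 = X2 := e1.symm.trans e2
  subst hX
  exact ⟨rfl, by simpa using h⟩

lemma stackSort_nil : stackSort [] = [] := by rw [stackSort]

lemma stackSort_eq_of_ne_nil (l : List ℕ) (h : l ≠ []) :
    stackSort l = stackSort (l.takeWhile (· ≠ l.max?.getD 0)) ++
      stackSort ((l.dropWhile (· ≠ l.max?.getD 0)).tail) ++ [l.max?.getD 0] := by
  cases l with
  | nil => exact absurd rfl h
  | cons a rest => rw [stackSort]

/-- The key splitting property of `stackSort`. -/
lemma stackSort_split (l1 l2 : List ℕ) (m : ℕ) (h : ∀ x ∈ l1 ++ l2, x < m) :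
    stackSort (l1 ++ m :: l2) = stackSort l1 ++ stackSort l2 ++ [m] := by
  have hmax : (l1 ++ m :: l2).max? = some m := by
    apply aux_max?_eq
    · simp
    · intro x hx
      rcases List.mem_append.mp hx with hx | hx
      · exact le_of_lt (h x (List.mem_append.mpr (Or.inl hx)))
      · rcases List.mem_cons.mp hx with hx | hx
        · exact le_of_eq hx
        · exact le_of_lt (h x (List.mem_append.mpr (Or.inr hx)))
  have hne : l1 ++ m :: l2 ≠ [] := by simp
  rw [stackSort_eq_of_ne_nil _ hne, hmax]
  have hp : ∀ x ∈ l1, (fun y => decide (y ≠ (some m).getD 0)) x = true := by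
    intro x hx
    simp only [Option.getD_some, decide_eq_true_eq]
    exact Nat.ne_of_lt (h x (List.mem_append.mpr (Or.inl hx)))
  have ht : (l1 ++ m :: l2).takeWhile (· ≠ (some m).getD 0) = l1 := by
    rw [aux_takeWhile_append hp]
    simp
  have hd : (l1 ++ m :: l2).dropWhile (· ≠ (some m).getD 0) = m :: l2 := by
    rw [aux_dropWhile_append hp]
    simp
  rw [ht, hd]
  simp

/-- `stackSort` permutes its input. -/
lemma stackSort_perm : ∀ (n : ℕ) (l : List ℕ), l.length ≤ n → (stackSort l).Perm l := by
  intro n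
  induction n with
  | zero =>
    intro l hl
    have : l = [] := List.eq_nil_of_length_eq_zero (Nat.le_zero.mp hl)
    subst this; simp [stackSort_nil]
  | succ n ih =>
    intro l hl
    rcases eq_or_ne l [] with rfl | hne
    · simp [stackSort_nil]
    · set m := l.max?.getD 0 with hm
      have hmem : m ∈ l := max_getD_mem l hne
      set p : ℕ → Bool := (· ≠ m) with hp
      have hdne : l.dropWhile p ≠ [] := by
        intro hnil
        have := List.dropWhile_eq_nil_iff.mp hnil m hmem
        simp [hp] at this
      have hhead : (l.dropWhile p).head hdne = m := by
        have := List.head_dropWhile_not p hdne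
        simpa [hp] using this
      have hdrop : l.dropWhile p = m :: (l.dropWhile p).tail := by
        conv_lhs => rw [← List.cons_head_tail hdne, hhead]
      have hsplit : l = l.takeWhile p ++ m :: (l.dropWhile p).tail := by
        conv_lhs => rw [← List.takeWhile_append_dropWhile (p := p) (l := l)]
        exact congrArg (fun z => l.takeWhile p ++ z) hdrop
      have hlen1 : (l.takeWhile p).length ≤ n := by
        have := length_takeWhile_lt p l m hmem (by simp [hp])
        omega
      have hlen2 : ((l.dropWhile p).tail).length ≤ n := by
        have := length_dropWhile_tail_lt p l hne
        omega
      have e := stackSort_eq_of_ne_nil l hne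
      rw [← hm, ← hp] at e
      rw [e]
      have p1 := ih _ hlen1
      have p2 := ih _ hlen2
      refine ((p1.append p2).append_right _).trans ?_
      rw [List.append_assoc]
      refine ((List.perm_append_singleton _ _).append_left _).trans ?_
      exact List.Perm.of_eq hsplit.symm

end Aux

section Trees

open List BTree

/-- Postorder reading of a tree. -/
def BTree.postorder : BTree → List ℕ
  | .leaf => []
  | .node L a R => L.postorder ++ R.postorder ++ [a]

lemma BTree.inorder_eq_nil_iff (T : BTree) : T.inorder = [] ↔ T = .leaf := by
  cases T <;> simp [BTree.inorder]

lemma BTree.postorder_eq_nil_iff (T : BTree) : T.postorder = [] ↔ T = .leaf := by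
  cases T <;> simp [BTree.postorder]

lemma BTree.postorder_perm_inorder (T : BTree) : T.postorder.Perm T.inorder := by
  induction T with
  | leaf => simp [BTree.postorder, BTree.inorder]
  | node L a R ihL ihR =>
    simp only [BTree.postorder, BTree.inorder]
    refine ((ihL.append ihR).append_right _).trans ?_
    rw [List.append_assoc]
    exact (List.perm_append_singleton _ _).append_left _

/-- Size of a tree. -/
def BTree.tsize : BTree → ℕ
  | .leaf => 0
  | .node L _ R => L.tsize + R.tsize + 1

lemma BTree.length_inorder (T : BTree) : T.inorder.length = T.tsize := by
  induction T with
  | leaf => simp [BTree.inorder, BTree.tsize]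
  | node L a R ihL ihR => simp [BTree.inorder, BTree.tsize, ihL, ihR]; omega

/-- All labels of a decreasing tree are at most the root label. -/
lemma BTree.le_root_aux : ∀ (n : ℕ) (L : BTree) (a : ℕ) (R : BTree),
    (BTree.node L a R).tsize ≤ n → (BTree.node L a R).Decreasing →
    ∀ x ∈ (BTree.node L a R).inorder, x ≤ a := by
  intro n
  induction n with
  | zero => intro L a R hsz; simp [BTree.tsize] at hsz
  | succ n ih =>
    intro L a R hsz hd x hx
    cases hd with
    | node _ _ _ hLd hRd hLc hRc =>
      simp only [BTree.inorder, List.mem_append, List.mem_cons] at hx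
      rcases hx with hx | hx | hx
      · cases L with
        | leaf => simp [BTree.inorder] at hx
        | node P q Q =>
          have hq : q < a := hLc P q Q rfl
          have hsz' : (BTree.node P q Q).tsize ≤ n := by
            simp only [BTree.tsize] at hsz ⊢; omega
          have := ih P q Q hsz' hLd x (by simpa [BTree.inorder] using hx)
          omega
      · omega
      · cases R with
        | leaf => simp [BTree.inorder] at hx
        | node P q Q =>
          have hq : q < a := hRc P q Q rfl
          have hsz' : (BTree.node P q Q).tsize ≤ n := by
            simp only [BTree.tsize] at hsz ⊢; omega
          have := ih P q Q hsz' hRd x (by simpa [BTree.inorder] using hx)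
          omega

lemma BTree.le_root {L : BTree} {a : ℕ} {R : BTree} (h : (BTree.node L a R).Decreasing) :
    ∀ x ∈ (BTree.node L a R).inorder, x ≤ a :=
  BTree.le_root_aux (BTree.node L a R).tsize L a R (le_refl _) h

lemma BTree.lt_root {L : BTree} {a : ℕ} {R : BTree} (h : (BTree.node L a R).Decreasing) :
    ∀ x ∈ L.inorder ++ R.inorder, x < a := by
  intro x hx
  cases h with
  | node _ _ _ hLd hRd hLc hRc =>
    rcases List.mem_append.mp hx with hx | hx
    · cases L with
      | leaf => simp [BTree.inorder] at hx
      | node P q Q =>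
        have hq : q < a := hLc P q Q rfl
        have := BTree.le_root (L := P) (a := q) (R := Q) hLd x hx
        omega
    · cases R with
      | leaf => simp [BTree.inorder] at hx
      | node P q Q =>
        have hq : q < a := hRc P q Q rfl
        have := BTree.le_root (L := P) (a := q) (R := Q) hRd x hx
        omega

/-- `stackSort` of the in-order word of a decreasing tree is its postorder word. -/
lemma stackSort_inorder (T : BTree) (hT : T.Decreasing) :
    stackSort T.inorder = T.postorder := by
  induction T with
  | leaf => simpa [BTree.inorder, BTree.postorder] using stackSort_nil
  | node L a R ihL ihR =>
    cases hT with
    | node _ _ _ hLd hRd hLc hRc =>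
      have h := BTree.lt_root (BTree.Decreasing.node L a R hLd hRd hLc hRc)
      simp only [BTree.inorder, BTree.postorder]
      rw [stackSort_split _ _ _ h, ihL hLd, ihR hRd]

/-- The in-order positions (0-indexed) of the vertices, read in post-order. -/
def BTree.posList : BTree → List ℕ
  | .leaf => []
  | .node L _ R => L.posList ++ (R.posList.map (· + (L.tsize + 1))) ++ [L.tsize]

/-- The shape of a tree: all labels replaced by `0`. -/
def BTree.shape : BTree → BTree
  | .leaf => .leaf
  | .node L _ R => .node L.shape 0 R.shape

lemma BTree.tsize_shape (T : BTree) : T.shape.tsize = T.tsize := by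
  induction T with
  | leaf => rfl
  | node L a R ihL ihR => simp [BTree.shape, BTree.tsize, ihL, ihR]

lemma BTree.posList_shape (T : BTree) : T.shape.posList = T.posList := by
  induction T with
  | leaf => rfl
  | node L a R ihL ihR => simp [BTree.shape, BTree.posList, ihL, ihR, BTree.tsize_shape]

lemma BTree.length_posList (T : BTree) : T.posList.length = T.tsize := by
  induction T with
  | leaf => rfl
  | node L a R ihL ihR => simp [BTree.posList, BTree.tsize, ihL, ihR]; omega

/-- `posList` via `indexOf` on the in-order word. -/
lemma BTree.postorder_map_indexOf (T : BTree) (h : T.inorder.Nodup) :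
    T.postorder.map (fun k => T.inorder.idxOf k) = T.posList := by
  induction T with
  | leaf => rfl
  | node L a R ihL ihR =>
    simp only [BTree.inorder] at h
    have hndL : L.inorder.Nodup := h.of_append_left
    have hndR : R.inorder.Nodup := (h.of_append_right).of_cons
    have hdisj : ∀ x ∈ L.inorder, x ∉ (a :: R.inorder) := by
      have := (List.nodup_append'.mp h).2.2
      exact fun x hx hx' => this hx hx'
    have haL : a ∉ L.inorder := fun hc => hdisj a hc (by simp)
    have haR : a ∉ R.inorder := (List.nodup_cons.mp h.of_append_right).1
    simp only [BTree.postorder, BTree.inorder, List.map_append]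
    congr 1
    · congr 1
      · -- block for L
        rw [← ihL hndL]
        apply List.map_congr_left
        intro k hk
        have hkL : k ∈ L.inorder := (L.postorder_perm_inorder).mem_iff.mp hk
        exact List.idxOf_append_of_mem hkL
      · -- block for R
        rw [← ihR hndR]
        rw [← List.comp_map]
        apply List.map_congr_left
        intro k hk
        have hkR : k ∈ R.inorder := (R.postorder_perm_inorder).mem_iff.mp hk
        have hkL : k ∉ L.inorder := fun hc => hdisj k hc (by simp [hkR])
        have hka : k ≠ a := fun hc => haR (hc ▸ hkR)
        simp only [Function.comp]
        rw [List.idxOf_append_of_notMem hkL, List.idxOf_cons_ne _ (Ne.symm hka)]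
        rw [BTree.length_inorder]
        omega
    · -- the root
      simp only [List.map_cons, List.map_nil]
      rw [List.idxOf_append_of_notMem haL, List.idxOf_cons_self, BTree.length_inorder]
      simp

/-- `posList` determines the shape. -/
lemma BTree.shape_eq_of_posList : ∀ (T T' : BTree), T.posList = T'.posList →
    T.shape = T'.shape := by
  intro T
  induction T with
  | leaf =>
    intro T' hP
    cases T' with
    | leaf => rfl
    | node L' a' R' =>
      exfalso
      have : (BTree.node L' a' R').posList = [] := hP.symm
      simp [BTree.posList] at this
  | node L a R ihL ihR =>
    intro T' hP
    cases T' with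
    | leaf =>
      exfalso
      have : (BTree.node L a R).posList = [] := hP
      simp [BTree.posList] at this
    | node L' a' R' =>
      simp only [BTree.posList] at hP
      have h1 : L.posList ++ R.posList.map (· + (L.tsize + 1)) =
          L'.posList ++ R'.posList.map (· + (L'.tsize + 1)) ∧ ([L.tsize] : List ℕ) = [L'.tsize] :=
        List.append_inj' hP (by simp)
      obtain ⟨hAB, hx⟩ := h1
      have hsz : L.tsize = L'.tsize := by simpa using hx
      have h2 : L.posList = L'.posList ∧
          R.posList.map (· + (L.tsize + 1)) = R'.posList.map (· + (L'.tsize + 1)) :=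
        List.append_inj hAB (by rw [BTree.length_posList, BTree.length_posList, hsz])
      obtain ⟨hL, hRm⟩ := h2
      rw [hsz] at hRm
      have hR : R.posList = R'.posList := by
        have hinj : Function.Injective (· + (L'.tsize + 1)) := fun x y hxy => by
          simpa using hxy
        exact List.map_injective_iff.mpr hinj hRm
      simp only [BTree.shape, ihL L' hL, ihR R' hR]

lemma aux_le_max_getD {l : List ℕ} {x : ℕ} (hx : x ∈ l) : x ≤ l.max?.getD 0 := by
  have h1 := List.le_maximum_of_mem' hx
  rw [List.getD_max?_eq_unbotD_maximum l 0]
  cases hmx : l.maximum with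
  | bot => rw [hmx] at h1; exact absurd h1 (by simp)
  | coe y => rw [hmx] at h1; simpa using h1

/-- Every list with no duplicates is the in-order word of a decreasing tree. -/
lemma exists_decreasing_tree : ∀ (n : ℕ) (l : List ℕ), l.length ≤ n → l.Nodup →
    ∃ U : BTree, U.Decreasing ∧ U.inorder = l := by
  intro n
  induction n with
  | zero =>
    intro l hl _
    have : l = [] := List.eq_nil_of_length_eq_zero (Nat.le_zero.mp hl)
    exact ⟨.leaf, BTree.Decreasing.leaf, by simp [this, BTree.inorder]⟩
  | succ n ih =>
    intro l hl hnd
    rcases eq_or_ne l [] with rfl | hne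
    · exact ⟨.leaf, BTree.Decreasing.leaf, by simp [BTree.inorder]⟩
    · set m := l.max?.getD 0 with hm
      have hmem : m ∈ l := max_getD_mem l hne
      have hub : ∀ x ∈ l, x ≤ m := fun x hx => aux_le_max_getD hx
      obtain ⟨s, t, hst⟩ := List.append_of_mem hmem
      rw [hst] at hnd hub hl
      obtain ⟨hnds, hnd2, hdisj⟩ := List.nodup_append'.mp hnd
      obtain ⟨hmnt, hndt⟩ := List.nodup_cons.mp hnd2
      have hms : m ∉ s := fun hc => hdisj hc (by simp)
      have hlt : ∀ x ∈ s ++ t, x < m := by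
        intro x hx
        rcases List.mem_append.mp hx with hx | hx
        · have h1 := hub x (by simp [hx])
          have h2 : x ≠ m := fun hc => hms (hc ▸ hx)
          omega
        · have h1 := hub x (by simp [hx])
          have h2 : x ≠ m := fun hc => hmnt (hc ▸ hx)
          omega
      have hls : s.length ≤ n := by simp at hl; omega
      have hlt' : t.length ≤ n := by simp at hl; omega
      obtain ⟨U1, hU1d, hU1i⟩ := ih s hls hnds
      obtain ⟨U2, hU2d, hU2i⟩ := ih t hlt' hndt
      refine ⟨.node U1 m U2, ?_, by simp [BTree.inorder, hU1i, hU2i, hst]⟩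
      refine BTree.Decreasing.node U1 m U2 hU1d hU2d ?_ ?_
      · intro LL b LR hE
        have hb : b ∈ U1.inorder := by rw [hE]; simp [BTree.inorder]
        exact hlt b (by rw [hU1i] at hb; simp [hb])
      · intro RL b RR hE
        have hb : b ∈ U2.inorder := by rw [hE]; simp [BTree.inorder]
        exact hlt b (by rw [hU2i] at hb; simp [hb])

end Trees

section SkelFormula

open List

lemma invw_getD (l : List ℕ) (k : ℕ) (h1 : 1 ≤ k) (h2 : k ≤ l.length) :
    (invw l).getD (k - 1) 0 = l.idxOf k + 1 := by
  unfold invw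
  have hlen : k - 1 < ((List.range' 1 l.length).map fun j => l.idxOf j + 1).length := by
    simp; omega
  rw [List.getD_eq_getElem _ _ hlen]
  have hk : 1 + 1 * (k - 1) = k := by omega
  rw [List.getElem_map, List.getElem_range', hk]

lemma skel_eq_map (l : List ℕ) (h : ∀ k ∈ stackSort l, 1 ≤ k ∧ k ≤ l.length) :
    skel l = (stackSort l).map (fun k => l.idxOf k + 1) := by
  unfold skel compw
  apply List.map_congr_left
  intro k hk
  exact invw_getD l k (h k hk).1 (h k hk).2

end SkelFormula

section Forest

open List

def BTree.isLeaf : BTree → Bool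
  | .leaf => true
  | .node _ _ _ => false

lemma BTree.isLeaf_iff (T : BTree) : T.isLeaf = true ↔ T = .leaf := by
  cases T <;> simp [BTree.isLeaf]

lemma BTree.isLeaf_false_iff (T : BTree) : T.isLeaf = false ↔ T ≠ .leaf := by
  cases T <;> simp [BTree.isLeaf]

def BTree.rootD : BTree → ℕ
  | .leaf => 0
  | .node _ a _ => a

def parts (L R : BTree) : List BTree :=
  (if L.isLeaf then [] else [L]) ++ (if R.isLeaf then [] else [R])

def wordOf (F : List BTree) : List ℕ := (F.map BTree.postorder).flatten

/-- The chain relation for canonical forests. -/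
def FRel (S S' : BTree) : Prop := ∃ c, S'.inorder.head? = some c ∧ c < S.rootD

/-- A good forest: nonempty, decreasing, canonical trees. -/
def GF (F : List BTree) : Prop := ∀ S ∈ F, S ≠ .leaf ∧ S.Decreasing ∧ S.Canonical

lemma wordOf_nil : wordOf [] = [] := rfl

lemma wordOf_cons (S : BTree) (F : List BTree) :
    wordOf (S :: F) = S.postorder ++ wordOf F := by simp [wordOf]

lemma wordOf_append (F1 F2 : List BTree) :
    wordOf (F1 ++ F2) = wordOf F1 ++ wordOf F2 := by simp [wordOf]

lemma wordOf_parts (L R : BTree) :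
    wordOf (parts L R) = L.postorder ++ R.postorder := by
  unfold parts
  cases hL : L.isLeaf <;> cases hR : R.isLeaf <;>
    simp_all [wordOf, BTree.isLeaf_iff, BTree.postorder]

lemma eq_nil_of_wordOf (F : List BTree) (hGF : GF F) (h : wordOf F = []) : F = [] := by
  cases F with
  | nil => rfl
  | cons S t =>
    exfalso
    rw [wordOf_cons] at h
    have hS : S.postorder = [] := (List.append_eq_nil_iff.mp h).1
    exact (hGF S (by simp)).1 ((BTree.postorder_eq_nil_iff S).mp hS)

lemma GF_append_iff (F1 F2 : List BTree) : GF (F1 ++ F2) ↔ GF F1 ∧ GF F2 := by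
  constructor
  · intro h
    exact ⟨fun S hS => h S (by simp [hS]), fun S hS => h S (by simp [hS])⟩
  · intro ⟨h1, h2⟩ S hS
    rcases List.mem_append.mp hS with hS | hS
    · exact h1 S hS
    · exact h2 S hS

/-- Decomposition of one side at the maximum. -/
lemma forest_decomp (UL : BTree) (mu : ℕ) (UR : BTree)
    (hUd : (BTree.node UL mu UR).Decreasing)
    (F : List BTree) (hGF : GF F) (hch : List.IsChain FRel F)
    (hW : (BTree.node UL mu UR).inorder = wordOf F)
    (hnd : (BTree.node UL mu UR).inorder.Nodup) :
    ∃ F1 Lj Rj F2, F = F1 ++ (BTree.node Lj mu Rj) :: F2 ∧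
      UL.inorder = wordOf (F1 ++ parts Lj Rj) ∧ UR.inorder = wordOf F2 ∧
      (F1 = [] ∨ (Lj.isLeaf = false ∧ Rj.isLeaf = false)) ∧
      (Lj.isLeaf = false → Rj.isLeaf = false) ∧
      GF (F1 ++ parts Lj Rj) ∧ List.IsChain FRel (F1 ++ parts Lj Rj) ∧
      GF F2 ∧ List.IsChain FRel F2 ∧
      (BTree.node Lj mu Rj).Decreasing ∧ (BTree.node Lj mu Rj).Canonical := by
  have hWin : (BTree.node UL mu UR).inorder = UL.inorder ++ mu :: UR.inorder := by
    simp [BTree.inorder]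
  -- find the tree containing mu
  have hmu_mem : mu ∈ wordOf F := by
    rw [← hW, hWin]; simp
  obtain ⟨b0, hb0, hmub⟩ := List.mem_flatten.mp hmu_mem
  obtain ⟨S, hSF, hSb⟩ := List.mem_map.mp hb0
  obtain ⟨F1, F2, hFeq⟩ := List.append_of_mem hSF
  obtain ⟨hSne, hSd, hSc⟩ := hGF S hSF
  -- S = node Lj b Rj with b = mu
  cases hS : S with
  | leaf => exact absurd hS hSne
  | node Lj b Rj =>
    have hbmu : b = mu := by
      rw [hS] at hSb hSd
      subst hSb
      have hmu_in : mu ∈ (BTree.node Lj b Rj).inorder :=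
        ((BTree.node Lj b Rj).postorder_perm_inorder).mem_iff.mp hmub
      have hmu_le : mu ≤ b := BTree.le_root hSd mu hmu_in
      have hb_in_word : b ∈ wordOf F := by
        rw [hFeq, wordOf_append, wordOf_cons]
        simp only [hS, List.mem_append]
        right; left
        exact ((BTree.node Lj b Rj).postorder_perm_inorder).symm.mem_iff.mp
          (by simp [BTree.inorder])
      have hlt : ∀ x ∈ UL.inorder ++ UR.inorder, x < mu := BTree.lt_root hUd
      by_contra hne
      have : b ∈ UL.inorder ++ mu :: UR.inorder := by rw [← hWin, hW]; exact hb_in_word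
      rcases List.mem_append.mp this with hx | hx
      · have := hlt b (List.mem_append.mpr (Or.inl hx)); omega
      · rcases List.mem_cons.mp hx with hx | hx
        · exact hne hx
        · have := hlt b (List.mem_append.mpr (Or.inr hx)); omega
    rw [hbmu] at hS
    have hlt : ∀ x ∈ UL.inorder ++ UR.inorder, x < mu := BTree.lt_root hUd
    -- word equation
    have hkey : UL.inorder ++ mu :: UR.inorder =
        (wordOf F1 ++ (Lj.postorder ++ Rj.postorder)) ++ mu :: wordOf F2 := by
      rw [← hWin, hW, hFeq, wordOf_append, wordOf_cons, hS]
      simp [BTree.postorder]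
    have hnd' : ((wordOf F1 ++ (Lj.postorder ++ Rj.postorder)) ++ mu :: wordOf F2).Nodup := by
      rw [← hkey, ← hWin]; exact hnd
    have hndU : (UL.inorder ++ mu :: UR.inorder).Nodup := by rw [← hWin]; exact hnd
    have hmuUL : mu ∉ UL.inorder := by
      have := (List.nodup_append'.mp hndU).2.2
      exact fun hc => this hc (by simp)
    have hmuX : mu ∉ wordOf F1 ++ (Lj.postorder ++ Rj.postorder) := by
      have := (List.nodup_append'.mp hnd').2.2
      exact fun hc => this hc (by simp)
    obtain ⟨hXeq, hYeq⟩ := aux_split_unique hkey hmuUL hmuX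
    -- canonical structure of S
    have hScan : (BTree.node Lj mu Rj).Canonical := hS ▸ hSc
    have hSdec : (BTree.node Lj mu Rj).Decreasing := hS ▸ hSd
    have hLR : Lj.isLeaf = false → Rj.isLeaf = false := by
      intro hLf
      cases hLc : Lj with
      | leaf => rw [hLc] at hLf; simp [BTree.isLeaf] at hLf
      | node LL bb LR =>
        cases hScan with
        | node _ _ _ _ _ hcan =>
          obtain ⟨c, hc, _⟩ := hcan LL bb LR hLc
          rw [BTree.isLeaf_false_iff]
          intro hRj
          rw [hRj] at hc
          simp [BTree.inorder] at hc
    -- dichotomy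
    have hdich : F1 = [] ∨ (Lj.isLeaf = false ∧ Rj.isLeaf = false) := by
      rcases eq_or_ne F1 [] with h1 | h1
      · exact Or.inl h1
      · right
        -- show Lj ≠ leaf
        have hLf : Lj.isLeaf = false := by
          by_contra hLt
          have hLleaf : Lj = .leaf := (BTree.isLeaf_iff Lj).mp (by
            revert hLt; cases Lj.isLeaf <;> simp)
          -- last of F1 relates to S
          have hPlast : F1.getLast? = some (F1.getLast h1) := List.getLast?_eq_getLast h1
          set P := F1.getLast h1 with hPdef
          have hPF1 : P ∈ F1 := List.getLast_mem h1
          have hrel : FRel P (BTree.node Lj mu Rj) := by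
            have hchF' : List.IsChain FRel (F1 ++ (BTree.node Lj mu Rj) :: F2) := by
              rw [← hS, ← hFeq]; exact hch
            exact (List.isChain_append.mp hchF').2.2 P hPlast _ (by simp)
          obtain ⟨c, hc, hclt⟩ := hrel
          rw [hLleaf] at hc
          simp [BTree.inorder] at hc
          -- hc : mu = c
          subst hc
          -- rootD P < mu since its value is in UL
          obtain ⟨hPne, hPd, _⟩ := hGF P (hFeq ▸ (by simp [hPF1]))
          cases hPc : P with
          | leaf => exact hPne hPc
          | node PL pp PR =>
            have hpmem : pp ∈ wordOf F1 := by
              rw [wordOf]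
              refine List.mem_flatten.mpr ⟨P.postorder, List.mem_map_of_mem hPF1, ?_⟩
              rw [hPc]
              exact ((BTree.node PL pp PR).postorder_perm_inorder).symm.mem_iff.mp
                (by simp [BTree.inorder])
            have hppUL : pp ∈ UL.inorder := by rw [hXeq]; simp [hpmem]
            have := hlt pp (List.mem_append.mpr (Or.inl hppUL))
            rw [hPc] at hclt
            simp [BTree.rootD] at hclt
            omega
        exact ⟨hLf, hLR hLf⟩
    -- chains and GF
    have hchain_parts : List.IsChain FRel (parts Lj Rj) := by
      unfold parts
      cases hLv : Lj.isLeaf <;> cases hRv : Rj.isLeaf <;> simp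
      · -- both nonleaf: need FRel Lj Rj
        cases hLc : Lj with
        | leaf => rw [hLc] at hLv; simp [BTree.isLeaf] at hLv
        | node LL bb LR =>
          cases hScan with
          | node _ _ _ _ _ hcan =>
            obtain ⟨c, hc, hlt'⟩ := hcan LL bb LR hLc
            exact ⟨c, hc, by simpa [BTree.rootD] using hlt'⟩
    have hchF : List.IsChain FRel (F1 ++ (BTree.node Lj mu Rj) :: F2) := by
      rw [← hS, ← hFeq]; exact hch
    obtain ⟨hchF1, hchSF2, hlink⟩ := List.isChain_append.mp hchF
    have hchF2 : List.IsChain FRel F2 := hchSF2.tail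
    have hchain_new : List.IsChain FRel (F1 ++ parts Lj Rj) := by
      rw [List.isChain_append]
      refine ⟨hchF1, hchain_parts, ?_⟩
      intro x hx y hy
      -- F1 nonempty and parts nonempty: Lj nonleaf case
      have hF1ne : F1 ≠ [] := by
        intro hc; rw [hc] at hx; simp at hx
      rcases hdich with hc | ⟨hLf, hRf⟩
      · exact absurd hc hF1ne
      · have hparts : parts Lj Rj = [Lj, Rj] := by unfold parts; rw [hLf, hRf]; simp
        rw [hparts] at hy
        simp at hy
        subst hy
        have hrel : FRel x (BTree.node Lj mu Rj) := hlink x hx _ (by simp)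
        obtain ⟨c, hc, hclt⟩ := hrel
        refine ⟨c, ?_, hclt⟩
        have hLne : Lj.inorder ≠ [] := by
          rw [Ne, BTree.inorder_eq_nil_iff]
          exact (BTree.isLeaf_false_iff Lj).mp hLf
        rw [BTree.inorder] at hc  -- inorder of node
        rwa [List.head?_append_of_ne_nil _ hLne] at hc
    have hGF1 : GF F1 := fun S hS' => hGF S (hFeq ▸ (by simp [hS']))
    have hGF2 : GF F2 := fun S hS' => hGF S (hFeq ▸ (by simp [hS']))
    have hGFparts : GF (parts Lj Rj) := by
      intro S hS'
      unfold parts at hS'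
      cases hSdec with
      | node _ _ _ hLd hRd _ _ =>
        cases hScan with
        | node _ _ _ hLcan hRcan _ =>
          rcases List.mem_append.mp hS' with hx | hx
          · cases hLv : Lj.isLeaf
            · rw [hLv] at hx; simp at hx
              subst hx
              exact ⟨(BTree.isLeaf_false_iff _).mp hLv, hLd, hLcan⟩
            · rw [hLv] at hx; simp at hx
          · cases hRv : Rj.isLeaf
            · rw [hRv] at hx; simp at hx
              subst hx
              exact ⟨(BTree.isLeaf_false_iff _).mp hRv, hRd, hRcan⟩
            · rw [hRv] at hx; simp at hx
    refine ⟨F1, Lj, Rj, F2, by rw [hFeq, hS], ?_, hYeq, hdich, hLR,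
      (GF_append_iff _ _).mpr ⟨hGF1, hGFparts⟩, hchain_new, hGF2, hchF2, hSdec, hScan⟩
    rw [hXeq, wordOf_append, wordOf_parts]

end Forest

section MainInduction

open List

/-- Reconstruction of the pieces from shape data. -/
lemma parts_recover (F1 F1' : List BTree) (L R L' R' : BTree)
    (hd : F1 = [] ∨ (L.isLeaf = false ∧ R.isLeaf = false))
    (hd' : F1' = [] ∨ (L'.isLeaf = false ∧ R'.isLeaf = false))
    (hlr : L.isLeaf = false → R.isLeaf = false)
    (hlr' : L'.isLeaf = false → R'.isLeaf = false)
    (hE : (F1 ++ parts L R).map BTree.shape = (F1' ++ parts L' R').map BTree.shape) :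
    F1.map BTree.shape = F1'.map BTree.shape ∧ L.shape = L'.shape ∧ R.shape = R'.shape := by
  have leafshape : ∀ T : BTree, T.isLeaf = true → T.shape = .leaf := by
    intro T hT
    rw [(BTree.isLeaf_iff T).mp hT]; rfl
  -- case on isLeaf L
  cases hL : L.isLeaf with
  | false =>
    have hR : R.isLeaf = false := hlr hL
    have hparts : parts L R = [L, R] := by unfold parts; rw [hL, hR]; simp
    -- |F1 ++ [L,R]| ≥ 2
    cases hL' : L'.isLeaf with
    | false =>
      have hR' : R'.isLeaf = false := hlr' hL'
      have hparts' : parts L' R' = [L', R'] := by unfold parts; rw [hL', hR']; simp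
      rw [hparts, hparts'] at hE
      simp only [List.map_append, List.map_cons, List.map_nil] at hE
      have := List.append_inj' hE (by simp)
      obtain ⟨h1, h2⟩ := this
      simp at h2
      exact ⟨h1, h2.1, h2.2⟩
    | true =>
      -- L' leaf: parts L' R' has ≤ 1 element; F1' = [] or both nonleaf (contradiction with L' leaf)
      have hF1' : F1' = [] := by
        rcases hd' with h | h
        · exact h
        · rw [hL'] at h; simp at h
      subst hF1'
      have hF1 : F1 = [] := by
        rcases hd with h | h
        · exact h
        · -- lengths: LHS ≥ |F1| + 2, RHS ≤ 1
          have hlen := congrArg List.length hE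
          simp only [List.length_map, List.length_append, hparts] at hlen
          unfold parts at hlen
          rw [hL'] at hlen
          exfalso
          cases hR'v : R'.isLeaf <;> rw [hR'v] at hlen <;> simp at hlen <;> omega
      subst hF1
      -- [shape L, shape R] = parts L' R' shaped, forcing |parts L' R'| = 2, contra L' leaf
      exfalso
      have hlen := congrArg List.length hE
      simp only [List.length_map, hparts] at hlen
      unfold parts at hlen
      rw [hL'] at hlen
      cases hR'v : R'.isLeaf <;> rw [hR'v] at hlen <;> simp at hlen
  | true =>
    have hF1 : F1 = [] := by
      rcases hd with h | h
      · exact h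
      · rw [hL] at h; simp at h
    subst hF1
    cases hL' : L'.isLeaf with
    | false =>
      -- symmetric contradiction
      exfalso
      have hR' : R'.isLeaf = false := hlr' hL'
      have hparts' : parts L' R' = [L', R'] := by unfold parts; rw [hL', hR']; simp
      have hF1' : F1' = [] := by
        rcases hd' with h | h
        · exact h
        · have hlen := congrArg List.length hE
          simp only [List.length_map, List.length_append, hparts'] at hlen
          unfold parts at hlen
          rw [hL] at hlen
          cases hRv : R.isLeaf <;> rw [hRv] at hlen <;> simp at hlen <;> omega
      subst hF1'
      have hlen := congrArg List.length hE
      simp only [List.length_map, hparts'] at hlen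
      unfold parts at hlen
      rw [hL] at hlen
      cases hRv : R.isLeaf <;> rw [hRv] at hlen <;> simp at hlen
    | true =>
      have hF1' : F1' = [] := by
        rcases hd' with h | h
        · exact h
        · rw [hL'] at h; simp at h
      subst hF1'
      refine ⟨rfl, by rw [leafshape L hL, leafshape L' hL'], ?_⟩
      unfold parts at hE
      rw [hL, hL'] at hE
      simp only [List.nil_append, if_true] at hE
      cases hRv : R.isLeaf with
      | true =>
        cases hR'v : R'.isLeaf with
        | true => rw [leafshape R hRv, leafshape R' hR'v]
        | false =>
          exfalso
          rw [hRv, hR'v] at hE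
          simp at hE
      | false =>
        cases hR'v : R'.isLeaf with
        | true =>
          exfalso
          rw [hRv, hR'v] at hE
          simp at hE
        | false =>
          rw [hRv, hR'v] at hE
          simpa using hE

/-- Main induction: the shape of the decreasing tree of the concatenated postorder word
determines the shapes of a chained canonical forest. -/
lemma forest_shape : ∀ (U U' : BTree) (F F' : List BTree),
    U.Decreasing → U'.Decreasing → GF F → GF F' →
    List.IsChain FRel F → List.IsChain FRel F' →
    U.inorder = wordOf F → U'.inorder = wordOf F' →
    U.inorder.Nodup → U'.inorder.Nodup →
    U.shape = U'.shape → F.map BTree.shape = F'.map BTree.shape := by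
  intro U
  induction U with
  | leaf =>
    intro U' F F' _ _ hGF hGF' _ _ hW hW' _ _ hsh
    have hU' : U' = .leaf := by
      cases U' with
      | leaf => rfl
      | node A x B => simp [BTree.shape] at hsh
    subst hU'
    have hF : F = [] := eq_nil_of_wordOf F hGF (by rw [← hW]; rfl)
    have hF' : F' = [] := eq_nil_of_wordOf F' hGF' (by rw [← hW']; rfl)
    rw [hF, hF']
  | node UL mu UR ihL ihR =>
    intro U' F F' hUd hU'd hGF hGF' hch hch' hW hW' hnd hnd' hsh
    cases U' with
    | leaf => simp [BTree.shape] at hsh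
    | node UL' mu' UR' =>
      have hshL : UL.shape = UL'.shape := by
        injection hsh with e1 e2 e3
      have hshR : UR.shape = UR'.shape := by
        injection hsh with e1 e2 e3
      obtain ⟨F1, Lj, Rj, F2, hFeq, hULw, hURw, hdich, hlr, hGFnew, hchnew, hGF2, hch2,
        hSd, hSc⟩ := forest_decomp UL mu UR hUd F hGF hch hW hnd
      obtain ⟨F1', Lj', Rj', F2', hFeq', hULw', hURw', hdich', hlr', hGFnew', hchnew',
        hGF2', hch2', hSd', hSc'⟩ := forest_decomp UL' mu' UR' hU'd F' hGF' hch' hW' hnd'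
      -- decreasing of subtrees of U
      have hULd : UL.Decreasing := by cases hUd with | node _ _ _ h1 h2 _ _ => exact h1
      have hURd : UR.Decreasing := by cases hUd with | node _ _ _ h1 h2 _ _ => exact h2
      have hUL'd : UL'.Decreasing := by cases hU'd with | node _ _ _ h1 h2 _ _ => exact h1
      have hUR'd : UR'.Decreasing := by cases hU'd with | node _ _ _ h1 h2 _ _ => exact h2
      -- nodups
      have hndU : (UL.inorder ++ mu :: UR.inorder).Nodup := by
        simpa [BTree.inorder] using hnd
      have hndUL : UL.inorder.Nodup := hndU.of_append_left
      have hndUR : UR.inorder.Nodup := (hndU.of_append_right).of_cons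
      have hndU' : (UL'.inorder ++ mu' :: UR'.inorder).Nodup := by
        simpa [BTree.inorder] using hnd'
      have hndUL' : UL'.inorder.Nodup := hndU'.of_append_left
      have hndUR' : UR'.inorder.Nodup := (hndU'.of_append_right).of_cons
      have hE1 := ihL UL' (F1 ++ parts Lj Rj) (F1' ++ parts Lj' Rj') hULd hUL'd
        hGFnew hGFnew' hchnew hchnew' hULw hULw' hndUL hndUL' hshL
      have hE2 := ihR UR' F2 F2' hURd hUR'd hGF2 hGF2' hch2 hch2' hURw hURw'
        hndUR hndUR' hshR
      obtain ⟨hF1map, hLsh, hRsh⟩ := parts_recover F1 F1' Lj Rj Lj' Rj'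
        hdich hdich' hlr hlr' hE1
      rw [hFeq, hFeq']
      simp only [List.map_append, List.map_cons]
      rw [hF1map, hE2]
      congr 2
      simp only [BTree.shape]
      rw [hLsh, hRsh]

end MainInduction

section FinalAssembly

open List

lemma isPermList_nodup {n : ℕ} {l : List ℕ} (h : IsPermList n l) : l.Nodup :=
  h.nodup_iff.mpr (by simpa using List.nodup_range' (s := 1) (n := n) (step := 1))

lemma isPermList_length {n : ℕ} {l : List ℕ} (h : IsPermList n l) : l.length = n := by
  have := h.length_eq
  simpa using this

lemma isPermList_bounds {n : ℕ} {l : List ℕ} (h : IsPermList n l) :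
    ∀ k ∈ stackSort l, 1 ≤ k ∧ k ≤ l.length := by
  intro k hk
  have hkl : k ∈ l := ((stackSort_perm l.length l (le_refl _)).mem_iff).mp hk
  have hmem : k ∈ List.range' 1 n := h.mem_iff.mp hkl
  have := List.mem_range'_1.mp hmem
  rw [isPermList_length h]
  omega

lemma skel_eq_posList {n : ℕ} {l : List ℕ} (h : IsPermList n l) (T : BTree)
    (hTd : T.Decreasing) (hTi : T.inorder = l) :
    skel l = T.posList.map (· + 1) := by
  rw [skel_eq_map l (isPermList_bounds h)]
  have hss : stackSort l = T.postorder := by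
    rw [← hTi]; exact stackSort_inorder T hTd
  rw [hss, ← hTi]
  have hcomp : (fun k => T.inorder.idxOf k + 1) =
      (fun m => m + 1) ∘ (fun k => T.inorder.idxOf k) := rfl
  rw [hcomp, List.comp_map]
  rw [T.postorder_map_indexOf (by rw [hTi]; exact isPermList_nodup h)]

lemma BTree.isLeaf_leaf : (BTree.leaf).isLeaf = true := rfl

lemma GF_single (T : BTree) (hd : T.Decreasing) (hc : T.Canonical) :
    GF (parts .leaf T) := by
  intro S hS
  cases hT : T.isLeaf with
  | true => simp [parts, BTree.isLeaf_leaf, hT] at hS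
  | false =>
    simp [parts, BTree.isLeaf_leaf, hT] at hS
    subst hS
    exact ⟨(BTree.isLeaf_false_iff _).mp hT, hd, hc⟩

lemma chain_single (T : BTree) : List.IsChain FRel (parts .leaf T) := by
  cases hT : T.isLeaf <;> simp [parts, BTree.isLeaf_leaf, hT]

lemma shape_of_parts_map {T T' : BTree}
    (h : (parts .leaf T).map BTree.shape = (parts .leaf T').map BTree.shape) :
    T.shape = T'.shape := by
  cases hT : T.isLeaf with
  | true =>
    cases hT' : T'.isLeaf with
    | true => rw [(BTree.isLeaf_iff T).mp hT, (BTree.isLeaf_iff T').mp hT']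
    | false => simp [parts, BTree.isLeaf_leaf, hT, hT'] at h
  | false =>
    cases hT' : T'.isLeaf with
    | true => simp [parts, BTree.isLeaf_leaf, hT, hT'] at h
    | false => simpa [parts, BTree.isLeaf_leaf, hT, hT'] using h

end FinalAssembly

/-- If two sorted permutations `π, π' ∈ Sₙ` have the same skeleton, then their canonical
preimages have the same skeleton. -/
theorem canonical_preimage_skeleton (n : ℕ) (π π' σ σ' : List ℕ)
    (hπ : IsPermList n π) (hπ' : IsPermList n π') (hsk : skel π = skel π')
    (hσ : IsPermList n σ) (hσs : stackSort σ = π) (hσc : CanonicalPerm σ)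
    (hσ' : IsPermList n σ') (hσs' : stackSort σ' = π') (hσc' : CanonicalPerm σ') :
    skel σ = skel σ' := by
  obtain ⟨T, hTd, hTi, hTc⟩ := hσc
  obtain ⟨T', hT'd, hT'i, hT'c⟩ := hσc'
  -- the decreasing trees of π and π'
  obtain ⟨U, hUd, hUi⟩ := exists_decreasing_tree π.length π (le_refl _) (isPermList_nodup hπ)
  obtain ⟨U', hU'd, hU'i⟩ :=
    exists_decreasing_tree π'.length π' (le_refl _) (isPermList_nodup hπ')
  -- skeletons as posLists
  have hskπ : skel π = U.posList.map (· + 1) := skel_eq_posList hπ U hUd hUi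
  have hskπ' : skel π' = U'.posList.map (· + 1) := skel_eq_posList hπ' U' hU'd hU'i
  have hPL : U.posList = U'.posList := by
    have h := hsk
    rw [hskπ, hskπ'] at h
    have hinj : Function.Injective (fun m : ℕ => m + 1) := fun x y hxy => by simpa using hxy
    exact List.map_injective_iff.mpr hinj h
  have hshU : U.shape = U'.shape := BTree.shape_eq_of_posList U U' hPL
  -- π is the postorder of T
  have hπT : π = T.postorder := by
    rw [← hσs, ← hTi]; exact stackSort_inorder T hTd
  have hπT' : π' = T'.postorder := by
    rw [← hσs', ← hT'i]; exact stackSort_inorder T' hT'd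
  -- apply the forest lemma
  have hWT : U.inorder = wordOf (parts .leaf T) := by
    rw [hUi, wordOf_parts, hπT]
    simp [BTree.postorder]
  have hWT' : U'.inorder = wordOf (parts .leaf T') := by
    rw [hU'i, wordOf_parts, hπT']
    simp [BTree.postorder]
  have hmap := forest_shape U U' (parts .leaf T) (parts .leaf T') hUd hU'd
    (GF_single T hTd hTc) (GF_single T' hT'd hT'c) (chain_single T) (chain_single T')
    hWT hWT' (by rw [hUi]; exact isPermList_nodup hπ) (by rw [hU'i]; exact isPermList_nodup hπ')
    hshU
  have hshT : T.shape = T'.shape := shape_of_parts_map hmap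
  have hPLT : T.posList = T'.posList := by
    rw [← BTree.posList_shape T, ← BTree.posList_shape T', hshT]
  rw [skel_eq_posList hσ T hTd hTi, skel_eq_posList hσ' T' hT'd hT'i, hPLT]
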